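/- Let σ > 0, d ≥ 1 an integer, and a, b, c reals with a, b > 0 and δ·a² > c² + b² for some 1/4 < δ ≤ 1. Set ā = √(c²+b²) and b̄ = a·b/ā. If b/(2σ) ≥ r(√(2π)/(2d)), where r(α) is the unique nonnegative zero of f(ζ,α) = (1−ζ²)(α + ∫₀^ζ e^{−t²/2} dt) − ζ e^{−ζ²/2}, then [1/(d+1) + (d/(d+1))φ_σ(a)]·[1/(d+1) + (d/(d+1))φ_σ(b)] ≤ [1/(d+1) + (d/(d+1))φ_σ(ā)]·[1/(d+1) + (d/(d+1))φ_σ(b̄)], with equality if and only if c = 0. -/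

import Mathlib

noncomputable def phi (σ ζ : ℝ) : ℝ :=
  (2 / Real.sqrt (2 * Real.pi)) * ∫ t in (0:ℝ)..(ζ / (2 * σ)), Real.exp (-t ^ 2 / 2)

noncomputable def f (ζ α : ℝ) : ℝ :=
  (1 - ζ ^ 2) * (α + ∫ t in (0:ℝ)..ζ, Real.exp (-t ^ 2 / 2)) - ζ * Real.exp (-ζ ^ 2 / 2)

noncomputable def G (α ζ : ℝ) : ℝ := α + ∫ t in (0:ℝ)..ζ, Real.exp (-t ^ 2 / 2)

lemma hasDerivAt_G (α ζ : ℝ) : HasDerivAt (G α) (Real.exp (-ζ ^ 2 / 2)) ζ := by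
  have hc : Continuous (fun t : ℝ => Real.exp (-t ^ 2 / 2)) := by continuity
  have := (intervalIntegral.integral_hasStrictDerivAt_right
    (hc.intervalIntegrable 0 ζ) (hc.stronglyMeasurableAtFilter _ _) hc.continuousAt).hasDerivAt
  exact (this.const_add α)

lemma G_pos {α : ℝ} (hα : 0 < α) {ζ : ℝ} (hζ : 0 ≤ ζ) : 0 < G α ζ := by
  have : 0 ≤ ∫ t in (0:ℝ)..ζ, Real.exp (-t ^ 2 / 2) := by
    apply intervalIntegral.integral_nonneg hζ
    intro t _; positivity
  unfold G; linarith

lemma f_eq (ζ α : ℝ) : f ζ α = (1 - ζ ^ 2) * G α ζ - ζ * Real.exp (-ζ ^ 2 / 2) := rfl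

lemma hasDerivAt_exp_neg (ζ : ℝ) :
    HasDerivAt (fun z : ℝ => Real.exp (-z ^ 2 / 2)) (-ζ * Real.exp (-ζ ^ 2 / 2)) ζ := by
  have h1 : HasDerivAt (fun z : ℝ => -z ^ 2 / 2) (-ζ) ζ := by
    have := ((hasDerivAt_pow 2 ζ).neg).div_const 2
    exact this.congr_deriv (by norm_num; ring)
  have := h1.exp
  exact this.congr_deriv (by ring)

lemma hasDerivAt_f (α ζ : ℝ) : HasDerivAt (fun z => f z α) (-2 * ζ * G α ζ) ζ := by
  have h1 : HasDerivAt (fun z : ℝ => 1 - z ^ 2) (-(2*ζ)) ζ := by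
    have := (hasDerivAt_pow 2 ζ).const_sub 1
    exact this.congr_deriv (by norm_num)
  have h2 := (h1.mul (hasDerivAt_G α ζ)).sub
    ((hasDerivAt_id ζ).mul (hasDerivAt_exp_neg ζ))
  have he : (fun z => f z α) = fun z => (1 - z ^ 2) * G α z - z * Real.exp (-z ^ 2 / 2) := by
    funext z; exact f_eq z α
  rw [he]
  refine h2.congr_deriv ?_
  simp only [id_eq]
  ring

lemma f_neg {α : ℝ} (hα : 0 < α) {r ζ : ℝ} (hr : 0 ≤ r) (hfr : f r α = 0) (h : r < ζ) :
    f ζ α < 0 := by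
  have hanti : StrictAntiOn (fun z => f z α) (Set.Ici 0) := by
    apply strictAntiOn_of_deriv_neg (convex_Ici 0)
    · have hdiff : Differentiable ℝ (fun z => f z α) :=
        fun z => (hasDerivAt_f α z).differentiableAt
      exact hdiff.continuous.continuousOn
    · intro z hz
      rw [interior_Ici] at hz
      have hz' : (0:ℝ) < z := hz
      rw [(hasDerivAt_f α z).deriv]
      have hG := G_pos hα (le_of_lt hz')
      nlinarith [mul_pos hz' hG]
  have := hanti hr (le_trans hr h.le) h
  simpa [hfr] using this

noncomputable def psi (α ζ : ℝ) : ℝ := ζ * Real.exp (-ζ ^ 2 / 2) / G α ζ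

lemma hasDerivAt_psi {α : ℝ} (hα : 0 < α) {ζ : ℝ} (hζ : 0 ≤ ζ) :
    HasDerivAt (psi α) (Real.exp (-ζ ^ 2 / 2) * f ζ α / (G α ζ) ^ 2) ζ := by
  have hG := G_pos hα hζ
  have hnum : HasDerivAt (fun z : ℝ => z * Real.exp (-z ^ 2 / 2))
      (1 * Real.exp (-ζ ^ 2 / 2) + ζ * (-ζ * Real.exp (-ζ ^ 2 / 2))) ζ :=
    (hasDerivAt_id ζ).mul (hasDerivAt_exp_neg ζ)
  have := hnum.div (hasDerivAt_G α ζ) (ne_of_gt hG)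
  refine this.congr_deriv ?_
  rw [f_eq]
  field_simp
  ring

lemma psi_strictAnti {α : ℝ} (hα : 0 < α) {r : ℝ} (hr0 : 0 ≤ r) (hfr : f r α = 0) :
    StrictAntiOn (psi α) (Set.Ici r) := by
  apply strictAntiOn_of_deriv_neg (convex_Ici r)
  · apply ContinuousOn.div
    · exact (Continuous.continuousOn (by continuity))
    · have hdiffG : Differentiable ℝ (G α) := fun z => (hasDerivAt_G α z).differentiableAt
      exact hdiffG.continuous.continuousOn
    · intro z hz
      exact ne_of_gt (G_pos hα (le_trans hr0 hz))
  · intro z hz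
    rw [interior_Ici] at hz
    have hz0 : 0 ≤ z := le_trans hr0 (le_of_lt hz)
    rw [(hasDerivAt_psi hα hz0).deriv]
    have hfneg := f_neg hα hr0 hfr hz
    have hG := G_pos hα hz0
    have he : 0 < Real.exp (-z ^ 2 / 2) := Real.exp_pos _
    have h2 : 0 < (G α z) ^ 2 := by positivity
    exact div_neg_of_neg_of_pos (mul_neg_of_pos_of_neg he hfneg) h2

lemma key_aux {α : ℝ} (hα : 0 < α) {r s t u v : ℝ} (hr0 : 0 ≤ r) (hfr : f r α = 0)
    (hrs : r ≤ s) (hs : 0 < s) (hsu : s < u) (hsv : s < v) (hut : u < t) (hvt : v < t)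
    (huv : u * v = s * t) (hle : u ≤ v) : G α s * G α t < G α u * G α v := by
  set P := s * t with hP
  have hu0 : 0 < u := lt_trans hs hsu
  have hv0 : 0 < v := lt_trans hs hsv
  have ht0 : 0 < t := lt_trans hu0 hut
  have hP0 : 0 < P := mul_pos hs ht0
  set F : ℝ → ℝ := fun z => G α z * G α (P / z) with hF
  have hGdiff : Differentiable ℝ (G α) := fun z => (hasDerivAt_G α z).differentiableAt
  have hGcont : Continuous (G α) := hGdiff.continuous
  have hFanti : StrictAntiOn F (Set.Icc v t) := by
    apply strictAntiOn_of_deriv_neg (convex_Icc v t)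
    · apply ContinuousOn.mul hGcont.continuousOn
      apply hGcont.comp_continuousOn
      apply ContinuousOn.div continuousOn_const continuousOn_id
      intro z hz
      exact ne_of_gt (lt_of_lt_of_le hv0 hz.1)
    · intro z hz
      rw [interior_Icc] at hz
      have hz0 : 0 < z := lt_trans hv0 hz.1
      set w := P / z with hw
      have hw0 : 0 < w := div_pos hP0 hz0
      have hwz : w * z = P := div_mul_cancel₀ P (ne_of_gt hz0)
      have hwlt : w < z := by
        rw [hw, div_lt_iff₀ hz0]
        nlinarith [huv, mul_le_mul_of_nonneg_right hle hv0.le, mul_self_lt_mul_self hv0.le hz.1]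
      have hws : s < w := by
        rw [hw, lt_div_iff₀ hz0, hP]
        nlinarith [hz.2]
      -- derivative of F
      have hdiv : HasDerivAt (fun z : ℝ => P / z) (P * -(z ^ 2)⁻¹) z := by
        have := (hasDerivAt_inv (ne_of_gt hz0)).const_mul P
        simpa [div_eq_mul_inv] using this
      have hcomp : HasDerivAt (fun z : ℝ => G α (P / z))
          (Real.exp (-w ^ 2 / 2) * (P * -(z ^ 2)⁻¹)) z :=
        (hasDerivAt_G α w).comp (h₂ := G α) z hdiv
      have hFd : HasDerivAt F
          (Real.exp (-z ^ 2 / 2) * G α w + G α z * (Real.exp (-w ^ 2 / 2) * (P * -(z ^ 2)⁻¹))) z :=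
        (hasDerivAt_G α z).mul hcomp
      rw [hFd.deriv]
      -- use psi monotonicity
      have hpsi := psi_strictAnti hα hr0 hfr (Set.mem_Ici.2 (le_trans hrs hws.le))
        (Set.mem_Ici.2 (le_trans hrs (le_of_lt (lt_trans hws hwlt)))) hwlt
      have hGw := G_pos hα hw0.le
      have hGz := G_pos hα hz0.le
      rw [psi, psi, div_lt_div_iff₀ hGz hGw] at hpsi
      have hrw : Real.exp (-z ^ 2 / 2) * G α w
          + G α z * (Real.exp (-w ^ 2 / 2) * (P * -(z ^ 2)⁻¹))
          = (z * Real.exp (-z ^ 2 / 2) * G α w - w * Real.exp (-w ^ 2 / 2) * G α z) / z := by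
        field_simp
        rw [← hwz]
        ring
      rw [hrw]
      apply div_neg_of_neg_of_pos _ hz0
      linarith
  have hvt' := hFanti (Set.left_mem_Icc.2 hvt.le) (Set.right_mem_Icc.2 hvt.le) hvt
  have h1 : P / t = s := by field_simp; rw [hP, mul_comm]
  have h2 : P / v = u := by
    rw [div_eq_iff (ne_of_gt hv0)]
    linarith [huv]
  simpa [hF, h1, h2, mul_comm] using hvt'

lemma key {α : ℝ} (hα : 0 < α) {r s t u v : ℝ} (hr0 : 0 ≤ r) (hfr : f r α = 0)
    (hrs : r ≤ s) (hs : 0 < s) (hsu : s < u) (hsv : s < v) (hut : u < t) (hvt : v < t)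
    (huv : u * v = s * t) : G α s * G α t < G α u * G α v := by
  rcases le_total u v with hle | hle
  · exact key_aux hα hr0 hfr hrs hs hsu hsv hut hvt huv hle
  · have := key_aux hα hr0 hfr hrs hs hsv hsu hvt hut (by linarith [huv, mul_comm u v]) hle
    calc G α s * G α t < G α v * G α u := this
    _ = G α u * G α v := mul_comm _ _


theorem stmt13 (σ : ℝ) (hσ : 0 < σ) (d : ℕ) (hd : 1 ≤ d) (a b c δ : ℝ)
    (ha : 0 < a) (hb : 0 < b) (hδ1 : 1 / 4 < δ) (hδ2 : δ ≤ 1)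
    (hcond : c ^ 2 + b ^ 2 < δ * a ^ 2)
    (rα : ℝ) (hr0 : 0 ≤ rα) (hrz : f rα (Real.sqrt (2 * Real.pi) / (2 * d)) = 0)
    (hcondr : rα ≤ b / (2 * σ)) :
    (1 / ((d : ℝ) + 1) + (d : ℝ) / ((d : ℝ) + 1) * phi σ a) *
        (1 / ((d : ℝ) + 1) + (d : ℝ) / ((d : ℝ) + 1) * phi σ b) ≤
      (1 / ((d : ℝ) + 1) + (d : ℝ) / ((d : ℝ) + 1) * phi σ (Real.sqrt (c ^ 2 + b ^ 2))) *
        (1 / ((d : ℝ) + 1) +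
          (d : ℝ) / ((d : ℝ) + 1) * phi σ (a * b / Real.sqrt (c ^ 2 + b ^ 2))) ∧
    ((1 / ((d : ℝ) + 1) + (d : ℝ) / ((d : ℝ) + 1) * phi σ a) *
        (1 / ((d : ℝ) + 1) + (d : ℝ) / ((d : ℝ) + 1) * phi σ b) =
      (1 / ((d : ℝ) + 1) + (d : ℝ) / ((d : ℝ) + 1) * phi σ (Real.sqrt (c ^ 2 + b ^ 2))) *
        (1 / ((d : ℝ) + 1) +
          (d : ℝ) / ((d : ℝ) + 1) * phi σ (a * b / Real.sqrt (c ^ 2 + b ^ 2))) ↔ c = 0) := by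
  have hd0 : (0:ℝ) < (d:ℝ) := by exact_mod_cast Nat.pos_of_ne_zero (by omega)
  have hπ : (0:ℝ) < Real.sqrt (2 * Real.pi) := Real.sqrt_pos.2 (by positivity)
  set α : ℝ := Real.sqrt (2 * Real.pi) / (2 * (d:ℝ)) with hαdef
  have hα : 0 < α := by positivity
  set C : ℝ := 2 * (d:ℝ) / (((d:ℝ) + 1) * Real.sqrt (2 * Real.pi)) with hCdef
  have hC : 0 < C := by positivity
  set g : ℝ → ℝ := fun x => 1 / ((d : ℝ) + 1) + (d : ℝ) / ((d : ℝ) + 1) * phi σ x with hg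
  have hrepr : ∀ x : ℝ, g x = C * G α (x / (2 * σ)) := by
    intro x
    simp only [hg, phi, G, hαdef, hCdef, mul_add]
    have h1 : ((d:ℝ) + 1) ≠ 0 := by positivity
    field_simp
  have heqc : c = 0 →
      g a * g b = g (Real.sqrt (c ^ 2 + b ^ 2)) * g (a * b / Real.sqrt (c ^ 2 + b ^ 2)) := by
    intro hc
    subst hc
    have h1 : Real.sqrt (0 ^ 2 + b ^ 2) = b := by
      rw [show (0:ℝ) ^ 2 + b ^ 2 = b ^ 2 by ring, Real.sqrt_sq hb.le]
    rw [h1, mul_div_assoc, div_self (ne_of_gt hb), mul_one, mul_comm]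
  have hlt : c ≠ 0 →
      g a * g b < g (Real.sqrt (c ^ 2 + b ^ 2)) * g (a * b / Real.sqrt (c ^ 2 + b ^ 2)) := by
    intro hc
    have hc2 : 0 < c ^ 2 := pow_two_pos_of_ne_zero hc
    have hA : 0 < c ^ 2 + b ^ 2 := by positivity
    have hA0 : 0 < Real.sqrt (c ^ 2 + b ^ 2) := Real.sqrt_pos.2 hA
    set A := Real.sqrt (c ^ 2 + b ^ 2) with hAdef
    have hbA : b < A := by
      rw [hAdef]
      nth_rewrite 1 [show b = Real.sqrt (b ^ 2) from (Real.sqrt_sq hb.le).symm]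
      apply Real.sqrt_lt_sqrt (by positivity)
      linarith
    have hAa : A < a := by
      rw [hAdef]
      rw [show a = Real.sqrt (a ^ 2) from (Real.sqrt_sq ha.le).symm]
      apply Real.sqrt_lt_sqrt hA.le
      nlinarith [sq_nonneg a]
    have hbv : b < a * b / A := by
      rw [lt_div_iff₀ hA0]; nlinarith
    have hva : a * b / A < a := by
      rw [div_lt_iff₀ hA0]; nlinarith
    have h2σ : (0:ℝ) < 2 * σ := by linarith
    have hkey := key (r := rα) (s := b / (2*σ)) (t := a / (2*σ)) (u := A / (2*σ))
      (v := (a * b / A) / (2*σ)) hα hr0 hrz hcondr (by positivity)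
      (by gcongr) (by gcongr) (by gcongr) (by gcongr)
      (by field_simp)
    rw [hrepr a, hrepr b, hrepr A, hrepr (a * b / A)]
    nlinarith [mul_lt_mul_of_pos_left hkey (mul_pos hC hC)]
  constructor
  · rcases eq_or_ne c 0 with hc | hc
    · exact le_of_eq (heqc hc)
    · exact le_of_lt (hlt hc)
  · constructor
    · intro he
      by_contra hc
      exact absurd he (ne_of_lt (hlt hc))
    · exact heqc
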